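/- Let f be differentiable on an interval containing [u,v], u < v, with f' integrable, and suppose |f'|^r is s-convex in the second sense on [u,v] for some s ∈ (0,1], where p, r > 1, 1/p + 1/r = 1. Then |(1/2)[(f(u)+f(v))/2 + f((u+v)/2)] - (1/(v-u)) ∫ᵤᵛ f(x) dx| with s = 1 satisfies: it is at most ((v-u)/(8(p+1)^(1/p) 4^(1/r))) · [(3|f'(u)|^r + |f'(v)|^r)^(1/r) + (|f'(u)|^r + 3|f'(v)|^r)^(1/r)], when |f'|^r is convex on [u,v]. -/

import Mathlib

open MeasureTheory intervalIntegral

lemma const_eq6 (p r h : ℝ) (hp : 1 < p) (hr : 1 < r) (hpr : 1 / p + 1 / r = 1) (hh : 0 < h) :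
    (1 / h) * ((2 * (h / 4) ^ (p + 1) / (p + 1)) ^ (1 / p) * (h / 8) ^ (1 / r))
      = h / (8 * (p + 1) ^ (1 / p) * 4 ^ (1 / r)) := by
  have hp0 : (0:ℝ) < p := by linarith
  have hr0 : (0:ℝ) < r := by linarith
  have hp1 : (0:ℝ) < p + 1 := by linarith
  have h4 : (0:ℝ) < h / 4 := by linarith
  have h8 : (0:ℝ) < h / 8 := by linarith
  have hbase : (0:ℝ) < 2 * (h / 4) ^ (p + 1) / (p + 1) := by positivity
  have hL : (0:ℝ) < (1 / h) * ((2 * (h / 4) ^ (p + 1) / (p + 1)) ^ (1 / p) * (h / 8) ^ (1 / r)) := by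
    positivity
  have hR : (0:ℝ) < h / (8 * (p + 1) ^ (1 / p) * 4 ^ (1 / r)) := by positivity
  apply Real.log_injOn_pos (Set.mem_Ioi.2 hL) (Set.mem_Ioi.2 hR)
  have l4 : Real.log 4 = 2 * Real.log 2 := by
    rw [show (4:ℝ) = 2 ^ (2:ℕ) by norm_num, Real.log_pow]; push_cast; ring
  have l8 : Real.log 8 = 3 * Real.log 2 := by
    rw [show (8:ℝ) = 2 ^ (3:ℕ) by norm_num, Real.log_pow]; push_cast; ring
  rw [Real.log_mul (by positivity) (by positivity), Real.log_mul (by positivity) (by positivity),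
    Real.log_rpow hbase, Real.log_rpow h8, Real.log_div (by positivity) hp1.ne',
    Real.log_mul two_ne_zero (by positivity), Real.log_rpow h4,
    Real.log_div hh.ne' (by norm_num : (4:ℝ) ≠ 0),
    Real.log_div hh.ne' (by norm_num : (8:ℝ) ≠ 0),
    Real.log_div hh.ne' (by positivity),
    Real.log_mul (by positivity) (by positivity),
    Real.log_mul (by norm_num : (8:ℝ) ≠ 0) (by positivity),
    Real.log_rpow hp1, Real.log_rpow (by norm_num : (0:ℝ) < 4),
    one_div h, Real.log_inv, l4, l8]
  have hpr' : r + p = p * r := by field_simp at hpr; linarith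
  field_simp
  linear_combination (Real.log h - Real.log 2) * hpr'

lemma half_holder6 (p r c d : ℝ) (hp : 1 < p) (hr : 1 < r) (hpr : 1 / p + 1 / r = 1)
    (hcd : c < d) (w : ℝ → ℝ) (hw : Continuous w) (hw0 : ∀ x, 0 ≤ w x) :
    ∫ x in c..d, |x - (c + d) / 2| * w x ≤
      (2 * ((d - c) / 2) ^ (p + 1) / (p + 1)) ^ (1 / p) * (∫ x in c..d, w x ^ r) ^ (1 / r) := by
  set mc := (c + d) / 2 with hmc
  have hp0 : (0:ℝ) < p := by linarith
  have hr0 : (0:ℝ) < r := by linarith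
  have habs : Continuous fun x : ℝ => |x - mc| := (continuous_id.sub continuous_const).abs
  have habsp : Continuous fun x : ℝ => |x - mc| ^ p :=
    habs.rpow_const (fun x => Or.inr hp0.le)
  -- value of ∫ |x-mc|^p
  have hval : ∫ x in c..d, |x - mc| ^ p = 2 * ((d - c) / 2) ^ (p + 1) / (p + 1) := by
    have hcm : c ≤ mc := by rw [hmc]; linarith
    have hmd : mc ≤ d := by rw [hmc]; linarith
    have h1 : ∫ x in c..mc, |x - mc| ^ p = ((d - c) / 2) ^ (p + 1) / (p + 1) := by
      have : ∫ x in c..mc, |x - mc| ^ p = ∫ x in c..mc, (fun t => t ^ p) (mc - x) := by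
        apply intervalIntegral.integral_congr
        intro x hx
        rw [Set.uIcc_of_le hcm] at hx
        show |x - mc| ^ p = (mc - x) ^ p
        rw [abs_of_nonpos (sub_nonpos.2 hx.2), neg_sub]
      rw [this, intervalIntegral.integral_comp_sub_left (fun t => t ^ p) mc]
      rw [integral_rpow (Or.inl (by linarith))]
      rw [show mc - c = (d - c) / 2 by rw [hmc]; ring, sub_self,
        Real.zero_rpow (by linarith : p + 1 ≠ 0)]
      ring
    have h2 : ∫ x in mc..d, |x - mc| ^ p = ((d - c) / 2) ^ (p + 1) / (p + 1) := by
      have : ∫ x in mc..d, |x - mc| ^ p = ∫ x in mc..d, (fun t => t ^ p) (x - mc) := by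
        apply intervalIntegral.integral_congr
        intro x hx
        rw [Set.uIcc_of_le hmd] at hx
        show |x - mc| ^ p = (x - mc) ^ p
        rw [abs_of_nonneg (sub_nonneg.2 hx.1)]
      rw [this, intervalIntegral.integral_comp_sub_right (fun t => t ^ p) mc]
      rw [integral_rpow (Or.inl (by linarith))]
      rw [show d - mc = (d - c) / 2 by rw [hmc]; ring, sub_self,
        Real.zero_rpow (by linarith : p + 1 ≠ 0)]
      ring
    rw [← intervalIntegral.integral_add_adjacent_intervals
      (habsp.intervalIntegrable c mc) (habsp.intervalIntegrable mc d), h1, h2]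
    ring
  -- Hölder
  have hfin : IsFiniteMeasure (volume.restrict (Set.Ioc c d)) := by
    constructor
    rw [Measure.restrict_apply_univ]
    exact measure_Ioc_lt_top
  have hconj : p.HolderConjugate r := Real.holderConjugate_iff.mpr ⟨hp, by rw [← one_div, ← one_div]; exact hpr⟩
  obtain ⟨C, hC⟩ : ∃ C, ∀ x ∈ Set.Icc c d, ‖w x‖ ≤ C :=
    (isCompact_Icc).exists_bound_of_continuousOn hw.continuousOn
  have hmemf : MemLp (fun x => |x - mc|) (ENNReal.ofReal p) (volume.restrict (Set.Ioc c d)) := by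
    apply MemLp.of_bound habs.aestronglyMeasurable.restrict (d - c)
    filter_upwards [ae_restrict_mem measurableSet_Ioc] with x hx
    rw [Real.norm_eq_abs, abs_abs, abs_le]
    constructor <;> linarith [hmc, hx.1, hx.2]
  have hmemg : MemLp w (ENNReal.ofReal r) (volume.restrict (Set.Ioc c d)) := by
    apply MemLp.of_bound hw.aestronglyMeasurable.restrict C
    filter_upwards [ae_restrict_mem measurableSet_Ioc] with x hx
    exact hC x (Set.Ioc_subset_Icc_self hx)
  have hold := MeasureTheory.integral_mul_le_Lp_mul_Lq_of_nonneg hconj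
    (Filter.Eventually.of_forall (fun x => abs_nonneg _))
    (Filter.Eventually.of_forall (fun x => hw0 x)) hmemf hmemg
  rw [intervalIntegral.integral_of_le hcd.le, intervalIntegral.integral_of_le hcd.le]
  calc ∫ x in Set.Ioc c d, |x - mc| * w x ≤
      (∫ x in Set.Ioc c d, |x - mc| ^ p) ^ (1 / p) * (∫ x in Set.Ioc c d, w x ^ r) ^ (1 / r) := hold
    _ = (2 * ((d - c) / 2) ^ (p + 1) / (p + 1)) ^ (1 / p) *
        (∫ x in Set.Ioc c d, w x ^ r) ^ (1 / r) := by
      rw [← intervalIntegral.integral_of_le hcd.le, hval]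

theorem stmt_6 (f f' : ℝ → ℝ) (u v p r : ℝ) (huv : u < v)
    (hp : 1 < p) (hr : 1 < r) (hpr : 1 / p + 1 / r = 1)
    (hd : ∀ x ∈ Set.Icc u v, HasDerivAt f (f' x) x)
    (hint : IntervalIntegrable f' volume u v)
    (hc : ConvexOn ℝ (Set.Icc u v) (fun x => |f' x| ^ r)) :
    |(1 / 2) * ((f u + f v) / 2 + f ((u + v) / 2))
        - (1 / (v - u)) * ∫ x in u..v, f x|
      ≤ ((v - u) / (8 * (p + 1) ^ (1 / p) * 4 ^ (1 / r))) *
          ((3 * |f' u| ^ r + |f' v| ^ r) ^ (1 / r)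
            + (|f' u| ^ r + 3 * |f' v| ^ r) ^ (1 / r)) := by
  have hvu : (0:ℝ) < v - u := sub_pos.2 huv
  have hr0 : (0:ℝ) < r := by linarith
  have hrne : r ≠ 0 := hr0.ne'
  have hum : u < (u + v) / 2 := by linarith
  have hmv : (u + v) / 2 < v := by linarith
  -- the linear majorant of |f'|^r
  set L : ℝ → ℝ := fun x => ((v - x) * |f' u| ^ r + (x - u) * |f' v| ^ r) / (v - u) with hL
  have hLcont : Continuous L := by
    apply Continuous.div_const
    exact ((continuous_const.sub continuous_id).mul continuous_const).add
      ((continuous_id.sub continuous_const).mul continuous_const)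
  have hLine : ∀ x ∈ Set.Icc u v, |f' x| ^ r ≤ L x := by
    intro x hx
    have h1 : (0:ℝ) ≤ (v - x) / (v - u) := div_nonneg (by linarith [hx.2]) hvu.le
    have h2 : (0:ℝ) ≤ (x - u) / (v - u) := div_nonneg (by linarith [hx.1]) hvu.le
    have h3 : (v - x) / (v - u) + (x - u) / (v - u) = 1 := by field_simp; ring
    have h4 : ((v - x) / (v - u)) • u + ((x - u) / (v - u)) • v = x := by
      simp only [smul_eq_mul]; field_simp; ring
    have h5 := hc.2 (Set.left_mem_Icc.2 huv.le) (Set.right_mem_Icc.2 huv.le) h1 h2 h3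
    rw [h4] at h5
    refine h5.trans (le_of_eq ?_)
    simp only [smul_eq_mul, hL]
    ring
  have hLnn : ∀ x ∈ Set.Icc u v, 0 ≤ L x := fun x hx =>
    le_trans (Real.rpow_nonneg (abs_nonneg _) r) (hLine x hx)
  -- the Hölder companion function
  set w : ℝ → ℝ := fun x => |L x| ^ (1 / r) with hw
  have hwcont : Continuous w := hLcont.abs.rpow_const fun x => Or.inr (by positivity)
  have hw0 : ∀ x, 0 ≤ w x := fun x => Real.rpow_nonneg (abs_nonneg _) _
  have hptw : ∀ x ∈ Set.Icc u v, |f' x| ≤ w x := by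
    intro x hx
    have h6 : |f' x| ^ r ≤ |L x| := by
      rw [abs_of_nonneg (hLnn x hx)]; exact hLine x hx
    calc |f' x| = (|f' x| ^ r) ^ (1 / r) := by
          rw [← Real.rpow_mul (abs_nonneg _), mul_one_div_cancel hrne, Real.rpow_one]
      _ ≤ |L x| ^ (1 / r) := Real.rpow_le_rpow (Real.rpow_nonneg (abs_nonneg _) _) h6
          (by positivity)
  have hwr : ∀ x, w x ^ r = |L x| := by
    intro x
    rw [hw]
    rw [← Real.rpow_mul (abs_nonneg _), one_div_mul_cancel hrne, Real.rpow_one]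
  -- general bound on a subinterval
  have hhalf : ∀ c d : ℝ, c < d → Set.Icc c d ⊆ Set.Icc u v →
      |∫ x in c..d, (x - (c + d) / 2) * f' x| ≤
        (2 * ((d - c) / 2) ^ (p + 1) / (p + 1)) ^ (1 / p) * (∫ x in c..d, L x) ^ (1 / r) := by
    intro c d hcd hsub
    have hsub' : Set.uIcc c d ⊆ Set.uIcc u v := by
      rw [Set.uIcc_of_le hcd.le, Set.uIcc_of_le huv.le]; exact hsub
    have hint_cd : IntervalIntegrable f' volume c d := hint.mono_set hsub'
    have habs : Continuous fun x : ℝ => |x - (c + d) / 2| :=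
      (continuous_id.sub continuous_const).abs
    have e1 : |∫ x in c..d, (x - (c + d) / 2) * f' x| ≤
        ∫ x in c..d, |x - (c + d) / 2| * |f' x| := by
      refine (intervalIntegral.abs_integral_le_integral_abs hcd.le).trans (le_of_eq ?_)
      simp only [abs_mul]
    have int1 : IntervalIntegrable (fun x => |x - (c + d) / 2| * |f' x|) volume c d :=
      hint_cd.abs.continuousOn_mul habs.continuousOn
    have int2 : IntervalIntegrable (fun x => |x - (c + d) / 2| * w x) volume c d :=
      (habs.mul hwcont).intervalIntegrable c d
    have e2 : (∫ x in c..d, |x - (c + d) / 2| * |f' x|) ≤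
        ∫ x in c..d, |x - (c + d) / 2| * w x := by
      refine intervalIntegral.integral_mono_on hcd.le int1 int2 (fun x hx => ?_)
      exact mul_le_mul_of_nonneg_left (hptw x (hsub hx)) (abs_nonneg _)
    have e3 := half_holder6 p r c d hp hr hpr hcd w hwcont hw0
    have e4 : (∫ x in c..d, w x ^ r) = ∫ x in c..d, L x := by
      apply intervalIntegral.integral_congr
      intro x hx
      rw [Set.uIcc_of_le hcd.le] at hx
      show w x ^ r = L x
      rw [hwr x, abs_of_nonneg (hLnn x (hsub hx))]
    rw [e4] at e3
    exact e1.trans (e2.trans e3)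
  -- integration by parts identities
  have hfc : ContinuousOn f (Set.Icc u v) := fun x hx =>
    ((hd x hx).continuousAt).continuousWithinAt
  have hsub1 : Set.uIcc u ((u + v) / 2) ⊆ Set.Icc u v := by
    rw [Set.uIcc_of_le hum.le]; exact Set.Icc_subset_Icc le_rfl hmv.le
  have hsub2 : Set.uIcc ((u + v) / 2) v ⊆ Set.Icc u v := by
    rw [Set.uIcc_of_le hmv.le]; exact Set.Icc_subset_Icc hum.le le_rfl
  have hfint1 : IntervalIntegrable f volume u ((u + v) / 2) :=
    (hfc.mono hsub1).intervalIntegrable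
  have hfint2 : IntervalIntegrable f volume ((u + v) / 2) v :=
    (hfc.mono hsub2).intervalIntegrable
  have hint1 : IntervalIntegrable f' volume u ((u + v) / 2) := by
    apply hint.mono_set; rw [Set.uIcc_of_le huv.le]; exact hsub1
  have hint2 : IntervalIntegrable f' volume ((u + v) / 2) v := by
    apply hint.mono_set; rw [Set.uIcc_of_le huv.le]; exact hsub2
  have hI1 : ∫ x in u..((u + v) / 2), (x - (u + (u + v) / 2) / 2) * f' x
      = ((u + v) / 2 - (u + (u + v) / 2) / 2) * f ((u + v) / 2)
        - (u - (u + (u + v) / 2) / 2) * f u - ∫ x in u..((u + v) / 2), f x := by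
    have := intervalIntegral.integral_mul_deriv_eq_deriv_mul
      (u := fun x => x - (u + (u + v) / 2) / 2) (v := f) (u' := fun _ => (1:ℝ)) (v' := f')
      (fun x _ => (hasDerivAt_id x).sub_const _)
      (fun x hx => hd x (hsub1 hx))
      intervalIntegrable_const hint1
    simpa using this
  have hI2 : ∫ x in ((u + v) / 2)..v, (x - ((u + v) / 2 + v) / 2) * f' x
      = (v - ((u + v) / 2 + v) / 2) * f v
        - ((u + v) / 2 - ((u + v) / 2 + v) / 2) * f ((u + v) / 2)
        - ∫ x in ((u + v) / 2)..v, f x := by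
    have := intervalIntegral.integral_mul_deriv_eq_deriv_mul
      (u := fun x => x - ((u + v) / 2 + v) / 2) (v := f) (u' := fun _ => (1:ℝ)) (v' := f')
      (fun x _ => (hasDerivAt_id x).sub_const _)
      (fun x hx => hd x (hsub2 hx))
      intervalIntegrable_const hint2
    simpa using this
  have hkey : (1 / 2) * ((f u + f v) / 2 + f ((u + v) / 2))
        - (1 / (v - u)) * ∫ x in u..v, f x
      = (1 / (v - u)) * ((∫ x in u..((u + v) / 2), (x - (u + (u + v) / 2) / 2) * f' x)
          + ∫ x in ((u + v) / 2)..v, (x - ((u + v) / 2 + v) / 2) * f' x) := by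
    rw [hI1, hI2, ← intervalIntegral.integral_add_adjacent_intervals hfint1 hfint2]
    field_simp
    ring
  -- values of ∫ L on the two halves
  have hLval : ∀ c d : ℝ, (∫ x in c..d, L x)
      = ((|f' u| ^ r * v - |f' v| ^ r * u) / (v - u)) * (d - c)
        + ((d ^ 2 - c ^ 2) / 2) * ((|f' v| ^ r - |f' u| ^ r) / (v - u)) := by
    intro c d
    have hrep : ∀ x : ℝ, L x = ((|f' u| ^ r * v - |f' v| ^ r * u) / (v - u))
        + x * ((|f' v| ^ r - |f' u| ^ r) / (v - u)) := by
      intro x; rw [hL]; ring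
    rw [intervalIntegral.integral_congr (g := fun x =>
      ((|f' u| ^ r * v - |f' v| ^ r * u) / (v - u))
        + x * ((|f' v| ^ r - |f' u| ^ r) / (v - u))) (fun x _ => hrep x)]
    have ii : IntervalIntegrable
        (fun x : ℝ => x * ((|f' v| ^ r - |f' u| ^ r) / (v - u))) volume c d :=
      (continuous_id.mul continuous_const).intervalIntegrable c d
    rw [intervalIntegral.integral_add intervalIntegrable_const ii,
      intervalIntegral.integral_const, intervalIntegral.integral_mul_const, integral_id]
    simp [smul_eq_mul]
    ring
  have hLv1 : (∫ x in u..((u + v) / 2), L x)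
      = (v - u) / 8 * (3 * |f' u| ^ r + |f' v| ^ r) := by
    rw [hLval]; field_simp; ring
  have hLv2 : (∫ x in ((u + v) / 2)..v, L x)
      = (v - u) / 8 * (|f' u| ^ r + 3 * |f' v| ^ r) := by
    rw [hLval]; field_simp; ring
  -- combine
  have hb1 := hhalf u ((u + v) / 2) hum (Set.Icc_subset_Icc le_rfl hmv.le)
  have hb2 := hhalf ((u + v) / 2) v hmv (Set.Icc_subset_Icc hum.le le_rfl)
  rw [hLv1] at hb1
  rw [hLv2] at hb2
  rw [show ((u + v) / 2 - u) / 2 = (v - u) / 4 by ring] at hb1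
  rw [show (v - (u + v) / 2) / 2 = (v - u) / 4 by ring] at hb2
  have hnnA : (0:ℝ) ≤ 3 * |f' u| ^ r + |f' v| ^ r := by positivity
  have hnnB : (0:ℝ) ≤ |f' u| ^ r + 3 * |f' v| ^ r := by positivity
  have hmul1 : ((v - u) / 8 * (3 * |f' u| ^ r + |f' v| ^ r)) ^ (1 / r)
      = ((v - u) / 8) ^ (1 / r) * (3 * |f' u| ^ r + |f' v| ^ r) ^ (1 / r) :=
    Real.mul_rpow (by positivity) hnnA
  have hmul2 : ((v - u) / 8 * (|f' u| ^ r + 3 * |f' v| ^ r)) ^ (1 / r)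
      = ((v - u) / 8) ^ (1 / r) * (|f' u| ^ r + 3 * |f' v| ^ r) ^ (1 / r) :=
    Real.mul_rpow (by positivity) hnnB
  rw [hmul1] at hb1
  rw [hmul2] at hb2
  have hconst := const_eq6 p r (v - u) hp hr hpr hvu
  rw [hkey, abs_mul, abs_of_nonneg (by positivity : (0:ℝ) ≤ 1 / (v - u))]
  calc (1 / (v - u)) * |(∫ x in u..((u + v) / 2), (x - (u + (u + v) / 2) / 2) * f' x)
          + ∫ x in ((u + v) / 2)..v, (x - ((u + v) / 2 + v) / 2) * f' x|
      ≤ (1 / (v - u)) * (|∫ x in u..((u + v) / 2), (x - (u + (u + v) / 2) / 2) * f' x|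
          + |∫ x in ((u + v) / 2)..v, (x - ((u + v) / 2 + v) / 2) * f' x|) := by
        gcongr
        exact abs_add_le _ _
    _ ≤ (1 / (v - u)) * ((2 * ((v - u) / 4) ^ (p + 1) / (p + 1)) ^ (1 / p) *
            (((v - u) / 8) ^ (1 / r) * (3 * |f' u| ^ r + |f' v| ^ r) ^ (1 / r))
          + (2 * ((v - u) / 4) ^ (p + 1) / (p + 1)) ^ (1 / p) *
            (((v - u) / 8) ^ (1 / r) * (|f' u| ^ r + 3 * |f' v| ^ r) ^ (1 / r))) := by
        gcongr
    _ = ((1 / (v - u)) * ((2 * ((v - u) / 4) ^ (p + 1) / (p + 1)) ^ (1 / p) *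
            ((v - u) / 8) ^ (1 / r))) *
          ((3 * |f' u| ^ r + |f' v| ^ r) ^ (1 / r)
            + (|f' u| ^ r + 3 * |f' v| ^ r) ^ (1 / r)) := by ring
    _ = ((v - u) / (8 * (p + 1) ^ (1 / p) * 4 ^ (1 / r))) *
          ((3 * |f' u| ^ r + |f' v| ^ r) ^ (1 / r)
            + (|f' u| ^ r + 3 * |f' v| ^ r) ^ (1 / r)) := by rw [hconst]
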